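/- Let b ∈ B have infinite order and suppose (f,b) is not conjugate to (1,b) in A ≀ B. If (h₀, z₀) is any conjugator of (f,b) and (g,c), then there exist integers k, j and a conjugator (h, z) of (f,b) and (g,c) with z = b^{k-j} z₀ such that z^{-1} x ∈ supp(g) for some x ∈ supp(f) ∩ ⟨b⟩t for a coset ⟨b⟩t on which π_t(f) ≠ e_A. Consequently, d_B(e, z) ≤ d_B(e, x) + d_B(e, z^{-1}x) for some x ∈ supp(f) and z^{-1}x ∈ supp(g). -/

import Mathlib

/-- Multiplication in the restricted wreath product `A ≀ B`:
`(f,b)(g,c) = (f · g^b, bc)` where `g^b (x) = g (b⁻¹ x)`. -/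
def wmul {A B : Type*} [Group A] [Group B] (p q : (B → A) × B) : (B → A) × B :=
  (fun x => p.1 x * q.1 (p.2⁻¹ * x), p.2 * q.2)

/-- The ordered product `F(M) · F(M-1) · ⋯ · F(-M)` (larger indices on the left). -/
def orderedProd {A : Type*} [Group A] (F : ℤ → A) (M : ℕ) : A :=
  ((List.range (2 * M + 1)).map (fun i => F ((M : ℤ) - i))).prod

namespace WreathAux

/-- Type synonym for the (unrestricted) wreath product carrier. -/
def W (A B : Type*) := (B → A) × B

variable {A B : Type*} [Group A] [Group B]

instance : Group (W A B) where
  mul := wmul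
  one := ((fun _ => 1), 1)
  inv p := (fun x => (p.1 (p.2 * x))⁻¹, p.2⁻¹)
  mul_assoc p q r := by
    show wmul (wmul p q) r = wmul p (wmul q r)
    simp only [wmul, mul_inv_rev, Prod.mk.injEq]
    exact ⟨by funext x; simp [mul_assoc], mul_assoc _ _ _⟩
  one_mul p := by
    show wmul _ p = p
    simp only [wmul]
    exact Prod.ext (by funext x; show (1:A) * p.1 ((1:B)⁻¹ * x) = p.1 x; simp) (one_mul _)
  mul_one p := by
    show wmul p _ = p
    simp only [wmul]
    exact Prod.ext (by funext x; show p.1 x * (1:A) = p.1 x; simp) (mul_one _)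
  inv_mul_cancel p := by
    show wmul _ p = _
    simp only [wmul]
    exact Prod.ext (by funext x; show (p.1 (p.2 * x))⁻¹ * p.1 (p.2⁻¹⁻¹ * x) = (1:A); simp) (inv_mul_cancel _)

lemma wmul_def (p q : W A B) : p * q = wmul p q := rfl

/-- Second projection as a monoid hom. -/
def Wsnd : W A B →* B where
  toFun p := p.2
  map_one' := rfl
  map_mul' _ _ := rfl

lemma snd_zpow (w : W A B) (m : ℤ) : (w ^ m).2 = w.2 ^ m := map_zpow Wsnd w m

/-- The restricted wreath product, as the subgroup of finitely supported elements. -/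
def finSupp (A B : Type*) [Group A] [Group B] : Subgroup (W A B) where
  carrier := {p | (Function.mulSupport p.1).Finite}
  one_mem' := by
    show (Function.mulSupport (fun _ : B => (1 : A))).Finite
    simp [Function.mulSupport]
  mul_mem' := by
    intro p q hp hq
    show (Function.mulSupport (fun x => p.1 x * q.1 (p.2⁻¹ * x))).Finite
    have hsub : Function.mulSupport (fun x => p.1 x * q.1 (p.2⁻¹ * x)) ⊆
        Function.mulSupport p.1 ∪ (fun x => p.2⁻¹ * x) ⁻¹' Function.mulSupport q.1 := by
      intro x hx
      by_contra hc
      simp only [Set.mem_union, Set.mem_preimage, Function.mem_mulSupport, not_or, not_not] at hc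
      exact hx (by simp [hc.1, hc.2])
    exact ((hp.union (hq.preimage (mul_right_injective _).injOn)).subset hsub)
  inv_mem' := by
    intro p hp
    show (Function.mulSupport (fun x => (p.1 (p.2 * x))⁻¹)).Finite
    have hsub : Function.mulSupport (fun x => (p.1 (p.2 * x))⁻¹) ⊆
        (fun x => p.2 * x) ⁻¹' Function.mulSupport p.1 := by
      intro x hx
      simp only [Function.mem_mulSupport, ne_eq, inv_eq_one] at hx
      exact hx
    exact (hp.preimage (mul_right_injective _).injOn).subset hsub

lemma mem_finSupp {p : W A B} :
    p ∈ finSupp A B ↔ (Function.mulSupport p.1).Finite := Iff.rfl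

lemma orderedProd_def' (F : ℤ → A) (M : ℕ) :
    orderedProd F M = ((List.range (2 * M + 1)).map (fun i : ℕ => F ((M : ℤ) - i))).prod := by
  unfold orderedProd
  simp only [List.pure_def, List.bind_eq_flatMap]
  rw [show (fun a : ℕ => ([((a : ℕ) : ℤ)] : List ℤ)) = pure ∘ (fun a : ℕ => ((a : ℕ) : ℤ)) from rfl,
    List.flatMap_pure_eq_map, List.map_map]
  rfl

lemma orderedProd_zero (F : ℤ → A) : orderedProd F 0 = F 0 := by
  rw [orderedProd_def', show 2 * 0 + 1 = 0 + 1 from rfl, List.prod_range_succ]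
  simp

lemma orderedProd_succ (F : ℤ → A) (M : ℕ) :
    orderedProd F (M + 1) = F ((M : ℤ) + 1) * orderedProd F M * F (-((M : ℤ) + 1)) := by
  rw [orderedProd_def', orderedProd_def']
  rw [show 2 * (M + 1) + 1 = (2 * M + 2) + 1 from by ring, List.prod_range_succ,
    show 2 * M + 2 = (2 * M + 1) + 1 from rfl, List.prod_range_succ']
  push_cast [Nat.succ_eq_add_one]
  ring_nf

lemma orderedProd_eq_one (F : ℤ → A) (M : ℕ) (h : ∀ i : ℤ, F i = 1) :
    orderedProd F M = 1 := by
  rw [orderedProd_def']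
  apply List.prod_eq_one
  intro x hx
  obtain ⟨i, _, rfl⟩ := List.mem_map.1 hx
  exact h _

lemma orderedProd_extend (F : ℤ → A) (M : ℕ) (h : ∀ i : ℤ, (M : ℤ) < |i| → F i = 1) :
    ∀ M', M ≤ M' → orderedProd F M' = orderedProd F M := by
  intro M' hMM'
  induction M' , hMM' using Nat.le_induction with
  | base => rfl
  | succ n hn ih =>
    rw [orderedProd_succ, ih]
    rw [h ((n : ℤ) + 1) (by rw [abs_of_nonneg (by positivity)]; omega),
        h (-((n : ℤ) + 1)) (by rw [abs_neg, abs_of_nonneg (by positivity)]; omega)]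
    simp

lemma telescope (F H : ℤ → A) (hrec : ∀ j : ℤ, H j = F j * H (j - 1)) (M : ℕ) :
    H M = orderedProd F M * H (-(M : ℤ) - 1) := by
  induction M with
  | zero => simpa [orderedProd_zero] using hrec 0
  | succ n ih =>
    have e1 : ((n + 1 : ℕ) : ℤ) = (n : ℤ) + 1 := by push_cast; ring
    have h1 : H ((n + 1 : ℕ) : ℤ) = F ((n : ℤ) + 1) * H n := by
      rw [e1, hrec ((n : ℤ) + 1)]; norm_num
    rw [h1, ih, hrec (-(n : ℤ) - 1), orderedProd_succ]
    have e2 : (-(n : ℤ) - 1 - 1) = -((n + 1 : ℕ) : ℤ) - 1 := by push_cast; ring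
    have e3 : (-(n : ℤ) - 1) = -((n : ℤ) + 1) := by ring
    rw [e2, e3]
    simp [mul_assoc]

lemma orderedProd_eq_lower (F : ℤ → A) (htop : ∀ i : ℤ, 1 ≤ i → F i = 1) (M : ℕ) :
    orderedProd F M = ((List.range (M + 1)).map (fun i : ℕ => F (-(i : ℤ)))).prod := by
  induction M with
  | zero =>
    rw [orderedProd_zero, show (0:ℕ) + 1 = 0 + 1 from rfl, List.prod_range_succ]
    simp
  | succ n ih =>
    rw [orderedProd_succ, ih, htop ((n : ℤ) + 1) (by omega), one_mul]
    rw [List.prod_range_succ (fun i : ℕ => F (-(i : ℤ))) (n + 1)]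
    congr 1

lemma pow_inj (b : B) (hb : ∀ k : ℤ, b ^ k = 1 → k = 0) (t : B) :
    Function.Injective (fun i : ℤ => b ^ i * t) := by
  intro i j hij
  simp only at hij
  have h1 : b ^ i = b ^ j := mul_right_cancel hij
  have h2 : b ^ (i - j) = 1 := by rw [zpow_sub, h1]; simp
  have := hb _ h2
  omega

lemma cutoff_exists (φ : B → A) (hφ : (Function.mulSupport φ).Finite)
    (b : B) (hb : ∀ k : ℤ, b ^ k = 1 → k = 0) (t : B) :
    ∃ M : ℕ, ∀ i : ℤ, (M : ℤ) < |i| → φ (b ^ i * t) = 1 := by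
  have hS : ((fun i : ℤ => b ^ i * t) ⁻¹' Function.mulSupport φ).Finite :=
    hφ.preimage ((pow_inj b hb t).injOn)
  have him : ((fun i : ℤ => |i|) '' ((fun i : ℤ => b ^ i * t) ⁻¹' Function.mulSupport φ)).Finite :=
    hS.image _
  obtain ⟨M₀, hM₀⟩ := him.bddAbove
  refine ⟨M₀.toNat, fun i hi => ?_⟩
  by_contra hne
  have h1 : |i| ∈ (fun i : ℤ => |i|) '' ((fun i : ℤ => b ^ i * t) ⁻¹' Function.mulSupport φ) :=
    Set.mem_image_of_mem _ (by simpa [Function.mem_mulSupport] using hne)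
  have h2 := hM₀ h1
  have h3 : M₀ ≤ (M₀.toNat : ℤ) := Int.self_le_toNat M₀
  omega

def Lf (f : B → A) (b : B) (N : ℕ) (x : B) : A :=
  ((List.range N).map (fun i : ℕ => f (b ^ (-(i : ℤ)) * x))).prod

lemma Lf_succ (f : B → A) (b : B) (N : ℕ) (x : B) :
    Lf f b (N + 1) x = Lf f b N x * f (b ^ (-(N : ℤ)) * x) :=
  List.prod_range_succ _ _

lemma Lf_succ' (f : B → A) (b : B) (N : ℕ) (x : B) :
    Lf f b (N + 1) x = f x * Lf f b N (b⁻¹ * x) := by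
  rw [Lf, List.prod_range_succ']
  congr 1
  · norm_num
  · rw [Lf]
    apply congrArg List.prod
    apply List.map_congr_left
    intro i _
    congr 1
    rw [← mul_assoc, ← zpow_sub_one]
    congr 1
    push_cast [Nat.succ_eq_add_one]
    ring

lemma Lf_stable (f : B → A) (b : B) (N : ℕ) (x : B)
    (hcut : ∀ i : ℕ, N ≤ i → f (b ^ (-(i : ℤ)) * x) = 1) :
    ∀ N', N ≤ N' → Lf f b N' x = Lf f b N x := by
  intro N' h
  induction N', h using Nat.le_induction with
  | base => rfl
  | succ n hn ih => rw [Lf_succ, hcut n hn, mul_one, ih]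

lemma exists_bad_coset (f : B → A) (b : B) (hf : (Function.mulSupport f).Finite)
    (hb : ∀ k : ℤ, b ^ k = 1 → k = 0)
    (hnot : ¬ ∃ (h : B → A) (z : B), (Function.mulSupport h).Finite ∧
        wmul (f, b) (h, z) = wmul (h, z) ((fun _ => 1), b)) :
    ∃ t : B, ∃ M : ℕ, (∀ i : ℤ, (M : ℤ) < |i| → f (b ^ i * t) = 1) ∧
      orderedProd (fun i => f (b ^ i * t)) M ≠ 1 := by
  by_contra hc
  push_neg at hc
  apply hnot
  have hex : ∀ x : B, ∃ N : ℕ, ∀ i : ℕ, N ≤ i → f (b ^ (-(i : ℤ)) * x) = 1 := by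
    intro x
    obtain ⟨M, hM⟩ := cutoff_exists f hf b hb x
    refine ⟨M + 1, fun i hi => hM (-(i : ℤ)) ?_⟩
    rw [abs_neg, abs_of_nonneg (by positivity)]
    omega
  choose N hN using hex
  set h : B → A := fun x => Lf f b (N x) x with hh
  have hstable : ∀ (x : B) (N' : ℕ), (∀ i : ℕ, N' ≤ i → f (b ^ (-(i : ℤ)) * x) = 1) →
      h x = Lf f b N' x := by
    intro x N' hcut
    have h1 := Lf_stable f b (N x) x (hN x) (max (N x) N') (le_max_left _ _)
    have h2 := Lf_stable f b N' x hcut (max (N x) N') (le_max_right _ _)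
    rw [hh]
    simp only
    rw [← h1, h2]
  have hrec : ∀ x, h x = f x * h (b⁻¹ * x) := by
    intro x
    have hcut : ∀ i : ℕ, (N (b⁻¹ * x) + 1) ≤ i → f (b ^ (-(i : ℤ)) * x) = 1 := by
      intro i hi
      obtain ⟨j, rfl⟩ : ∃ j, i = j + 1 := ⟨i - 1, by omega⟩
      have harg : b ^ (-((j + 1 : ℕ) : ℤ)) * x = b ^ (-(j : ℤ)) * (b⁻¹ * x) := by
        rw [← mul_assoc, ← zpow_sub_one]
        congr 1
        push_cast
        ring
      rw [harg]
      exact hN (b⁻¹ * x) j (by omega)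
    rw [hstable x (N (b⁻¹ * x) + 1) hcut, Lf_succ']
  have hvanish : ∀ x, (∀ i : ℤ, 1 ≤ i → f (b ^ i * x) = 1) → h x = 1 := by
    intro x htop
    have hMcut : ∀ i : ℤ, ((N x : ℕ) : ℤ) < |i| → f (b ^ i * x) = 1 := by
      intro i hi
      rcases le_or_gt 1 i with h1 | h1
      · exact htop i h1
      · have h2 : ((N x : ℕ) : ℤ) < -i := by rwa [abs_of_nonpos (by omega)] at hi
        obtain ⟨m, hm⟩ : ∃ m : ℕ, i = -(m : ℤ) := ⟨(-i).toNat, by omega⟩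
        rw [hm]
        exact hN x m (by omega)
    have h1 := hc x (N x) hMcut
    have h2 := orderedProd_eq_lower (fun i => f (b ^ i * x)) htop (N x)
    have h3 : h x = Lf f b (N x + 1) x := hstable x (N x + 1) (fun i hi => hN x i (by omega))
    rw [h3]
    show ((List.range (N x + 1)).map (fun i : ℕ => f (b ^ (-(i : ℤ)) * x))).prod = 1
    rw [← h2]
    exact h1
  have hfactor : ∀ x, h x ≠ 1 → ∃ i : ℕ, f (b ^ (-(i : ℤ)) * x) ≠ 1 := by
    intro x hx
    by_contra hcf
    push_neg at hcf
    apply hx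
    rw [hh]
    simp only
    apply List.prod_eq_one
    intro y hy
    obtain ⟨i, _, rfl⟩ := List.mem_map.1 hy
    exact hcf i
  have hfin : (Function.mulSupport h).Finite := by
    have hsub : Function.mulSupport h ⊆
        ⋃ s ∈ Function.mulSupport f, ⋃ s' ∈ Function.mulSupport f,
          {x : B | (∃ n : ℕ, x = b ^ (n : ℤ) * s) ∧ ∃ m : ℤ, 1 ≤ m ∧ x = b ^ (-m) * s'} := by
      intro x hx
      rw [Function.mem_mulSupport] at hx
      obtain ⟨i, hi⟩ := hfactor x hx
      have hup : ∃ m : ℤ, 1 ≤ m ∧ f (b ^ m * x) ≠ 1 := by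
        by_contra hcu
        push_neg at hcu
        exact hx (hvanish x hcu)
      obtain ⟨m, hm1, hm2⟩ := hup
      refine Set.mem_biUnion (Function.mem_mulSupport.2 hi) ?_
      refine Set.mem_biUnion (Function.mem_mulSupport.2 hm2) ?_
      refine ⟨⟨i, ?_⟩, ⟨m, hm1, ?_⟩⟩
      · rw [← mul_assoc, ← zpow_add]
        norm_num
      · rw [← mul_assoc, ← zpow_add]
        norm_num
    refine Set.Finite.subset ?_ hsub
    refine hf.biUnion (fun s _ => hf.biUnion (fun s' _ => ?_))
    by_cases hT : {x : B | (∃ n : ℕ, x = b ^ (n : ℤ) * s) ∧ ∃ m : ℤ, 1 ≤ m ∧ x = b ^ (-m) * s'}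
        = ∅
    · rw [hT]; exact Set.finite_empty
    · obtain ⟨x₀, ⟨⟨n₀, hn₀⟩, ⟨m₀, hm₀1, hm₀2⟩⟩⟩ := Set.nonempty_iff_ne_empty.2 hT
      have key : ∀ (n : ℕ) (m : ℤ), 1 ≤ m → b ^ (n : ℤ) * s = b ^ (-m) * s' →
          (n : ℤ) + m = (n₀ : ℤ) + m₀ := by
        intro n m hm1 hxm
        have e1 : b ^ ((n : ℤ) + m) * s = s' := by
          rw [add_comm, zpow_add, mul_assoc, hxm, ← mul_assoc, ← zpow_add]
          simp
        have e2 : b ^ ((n₀ : ℤ) + m₀) * s = s' := by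
          rw [add_comm, zpow_add, mul_assoc, ← hn₀, hm₀2, ← mul_assoc, ← zpow_add]
          simp
        exact pow_inj b hb s (show b ^ ((n:ℤ)+m) * s = b ^ ((n₀:ℤ)+m₀) * s by rw [e1, e2])
      have hsub2 : {x : B | (∃ n : ℕ, x = b ^ (n : ℤ) * s) ∧ ∃ m : ℤ, 1 ≤ m ∧ x = b ^ (-m) * s'}
          ⊆ (fun n : ℕ => b ^ (n : ℤ) * s) '' (Set.Iic ((n₀ : ℤ) + m₀).toNat) := by
        rintro x ⟨⟨n, rfl⟩, m, hm1, hxm⟩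
        refine ⟨n, ?_, rfl⟩
        have := key n m hm1 hxm
        simp only [Set.mem_Iic]
        omega
      exact ((Set.finite_Iic _).image _).subset hsub2
  refine ⟨h, 1, hfin, ?_⟩
  unfold wmul
  refine Prod.ext ?_ (by simp)
  funext x
  simp only [inv_one, one_mul, mul_one]
  exact (hrec x).symm

lemma conj_pushes_support (f g h : B → A) (b c z t : B)
    (hh : (Function.mulSupport h).Finite)
    (hb : ∀ k : ℤ, b ^ k = 1 → k = 0)
    (hconj : wmul (f, b) (h, z) = wmul (h, z) (g, c))
    (M : ℕ) (hM : ∀ i : ℤ, (M : ℤ) < |i| → f (b ^ i * t) = 1)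
    (hne : orderedProd (fun i => f (b ^ i * t)) M ≠ 1) :
    ∃ j : ℤ, g (z⁻¹ * (b ^ j * t)) ≠ 1 := by
  by_contra hcg
  push_neg at hcg
  have heq : ∀ x, f x * h (b⁻¹ * x) = h x * g (z⁻¹ * x) := by
    intro x
    exact congrFun (congrArg Prod.fst hconj) x
  have hrec : ∀ j : ℤ, h (b ^ j * t) = f (b ^ j * t) * h (b ^ (j - 1) * t) := by
    intro j
    have h1 := heq (b ^ j * t)
    rw [hcg j, mul_one] at h1
    rw [← h1]
    have harg : b⁻¹ * (b ^ j * t) = b ^ (j - 1) * t := by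
      rw [← mul_assoc]
      congr 1
      rw [← zpow_neg_one, ← zpow_add]
      congr 1
      ring
    rw [harg]
  obtain ⟨M', hM'⟩ := cutoff_exists h hh b hb t
  have hle : M ≤ max M M' + 1 := by omega
  set K := max M M' + 1 with hK
  have htel := telescope (fun j => f (b ^ j * t)) (fun j => h (b ^ j * t)) hrec K
  have htop : h (b ^ ((K : ℕ) : ℤ) * t) = 1 :=
    hM' _ (by rw [abs_of_nonneg (by positivity)]; omega)
  have hbot : h (b ^ (-((K : ℕ) : ℤ) - 1) * t) = 1 :=
    hM' _ (by rw [abs_of_nonpos (by omega)]; omega)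
  rw [htop, hbot, mul_one] at htel
  rw [← orderedProd_extend (fun i => f (b ^ i * t)) M hM K hle] at hne
  exact hne htel.symm

end WreathAux

/-- Let `b` have infinite order and suppose `(f,b)` is not
conjugate to `(1,b)` in `A ≀ B`. If `(h₀, z₀)` is any conjugator of `(f,b)` and
`(g,c)`, then there are integers `k, j` and a conjugator `(h, z)` with
`z = b^{k-j} z₀`, such that `z⁻¹x ∈ supp(g)` for some `x ∈ supp(f)` lying in a
coset `⟨b⟩t` on which `π_t(f) ≠ e_A`. Consequently, for every (left-invariant)
word-length-type function `ℓ` on `B` (subadditive and symmetric),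
`ℓ(z) ≤ ℓ(x) + ℓ(z⁻¹x)`. -/
theorem wreath_short_conjugator_B_component {A B : Type*} [Group A] [Group B]
    (f g h₀ : B → A) (b c z₀ : B)
    (hf : (Function.mulSupport f).Finite)
    (hg : (Function.mulSupport g).Finite)
    (hh₀ : (Function.mulSupport h₀).Finite)
    (hb : ∀ k : ℤ, b ^ k = 1 → k = 0)
    (hnot : ¬ ∃ (h : B → A) (z : B), (Function.mulSupport h).Finite ∧
        wmul (f, b) (h, z) = wmul (h, z) ((fun _ => 1), b))
    (hconj : wmul (f, b) (h₀, z₀) = wmul (h₀, z₀) (g, c)) :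
    ∃ (k j : ℤ) (h : B → A), (Function.mulSupport h).Finite ∧
      wmul (f, b) (h, b ^ (k - j) * z₀) = wmul (h, b ^ (k - j) * z₀) (g, c) ∧
      ∃ (x t : B), x ∈ Function.mulSupport f ∧ (∃ m : ℤ, x = b ^ m * t) ∧
        (∃ M : ℕ, (∀ i : ℤ, (M : ℤ) < |i| → f (b ^ i * t) = 1) ∧
          orderedProd (fun i => f (b ^ i * t)) M ≠ 1) ∧
        (b ^ (k - j) * z₀)⁻¹ * x ∈ Function.mulSupport g ∧
        ∀ ℓ : B → ℝ, (∀ u v : B, ℓ (u * v) ≤ ℓ u + ℓ v) →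
          (∀ u : B, ℓ u⁻¹ = ℓ u) →
          ℓ (b ^ (k - j) * z₀) ≤ ℓ x + ℓ ((b ^ (k - j) * z₀)⁻¹ * x) := by
  classical
  obtain ⟨t, M, hM, hne⟩ := WreathAux.exists_bad_coset f b hf hb hnot
  have hkex : ∃ k : ℤ, f (b ^ k * t) ≠ 1 := by
    by_contra hcf
    push_neg at hcf
    exact hne (WreathAux.orderedProd_eq_one _ M hcf)
  obtain ⟨k, hk⟩ := hkex
  obtain ⟨j, hj⟩ := WreathAux.conj_pushes_support f g h₀ b c z₀ t hh₀ hb hconj M hM hne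
  set w : WreathAux.W A B := (f, b) with hw
  set q₀ : WreathAux.W A B := (h₀, z₀) with hq₀def
  set r : WreathAux.W A B := (g, c) with hrdef
  have hwq : w * q₀ = q₀ * r := hconj
  set q : WreathAux.W A B := w ^ (k - j) * q₀ with hqdef
  have hq2 : q.2 = b ^ (k - j) * z₀ := by
    show (w ^ (k - j)).2 * z₀ = b ^ (k - j) * z₀
    rw [WreathAux.snd_zpow]
  have hqmem : q ∈ WreathAux.finSupp A B := by
    refine mul_mem (Subgroup.zpow_mem _ ?_ _) ?_
    · exact (WreathAux.mem_finSupp).2 hf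
    · exact (WreathAux.mem_finSupp).2 hh₀
  have hcomm : w * w ^ (k - j) = w ^ (k - j) * w := (Commute.refl w).zpow_right (k - j)
  have hconj2 : w * q = q * r := by
    rw [hqdef, ← mul_assoc, hcomm, mul_assoc, hwq, ← mul_assoc]
  refine ⟨k, j, q.1, (WreathAux.mem_finSupp).1 hqmem, ?_, ?_⟩
  · have hpair : ((q.1, b ^ (k - j) * z₀) : (B → A) × B) = q := by
      rw [← hq2]
      rfl
    rw [hpair]
    exact hconj2
  · refine ⟨b ^ k * t, t, Function.mem_mulSupport.2 hk, ⟨k, rfl⟩, ⟨M, hM, hne⟩, ?_, ?_⟩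
    · have harg : (b ^ (k - j) * z₀)⁻¹ * (b ^ k * t) = z₀⁻¹ * (b ^ j * t) := by
        group
      exact Function.mem_mulSupport.2 (by rw [harg]; exact hj)
    · intro ℓ hsubadd hsym
      have h1 := hsubadd (b ^ k * t) ((b ^ k * t)⁻¹ * (b ^ (k - j) * z₀))
      rw [mul_inv_cancel_left] at h1
      have h2 : ℓ ((b ^ k * t)⁻¹ * (b ^ (k - j) * z₀))
          = ℓ ((b ^ (k - j) * z₀)⁻¹ * (b ^ k * t)) := by
        rw [← hsym ((b ^ k * t)⁻¹ * (b ^ (k - j) * z₀))]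
        congr 1
        simp [mul_inv_rev]
      rw [h2] at h1
      exact h1
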